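/- For k ∈ ℝ define F_k : ℝ² → ℝ² by F_k(x, y) = (3/2 − x/2 − x·y³, (1/2 − k) − (3/2 − k)·y + x·y³). Then F_k(1, 1) = (0, 0) for every k, the total derivative of F_k at (1,1) is the matrix A(k) = [[−3/2, −3], [1, 3/2 + k]], the characteristic polynomial of A(k) is X² − k·X + (3/4 − 3k/2), and whenever k² + 6k − 3 < 0 the complex eigenvalues of A(k) are (k ± i·√(3 − 6k − k²))/2; in particular at k = 0 the eigenvalues are ±i·√3/2. -/

import Mathlib

open Polynomial

/-- The vector field `F_k(x,y) = (3/2 − x/2 − xy³, (1/2 − k) − (3/2 − k)y + xy³)`. -/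
noncomputable def Fk (k : ℝ) : ℝ × ℝ → ℝ × ℝ :=
  fun p => (3/2 - p.1/2 - p.1 * p.2 ^ 3, (1/2 - k) - (3/2 - k) * p.2 + p.1 * p.2 ^ 3)

/-- The matrix `A(k) = [[−3/2, −3], [1, 3/2 + k]]`. -/
noncomputable def Ak (k : ℝ) : Matrix (Fin 2) (Fin 2) ℝ := !![-3/2, -3; 1, 3/2 + k]

lemma hFk (k : ℝ) : DifferentiableAt ℝ (Fk k) (1, 1) ∧
      fderiv ℝ (Fk k) (1, 1) (1, 0) = (-3/2, 1) ∧
      fderiv ℝ (Fk k) (1, 1) (0, 1) = (-3, 3/2 + k) := by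
  have hg : Fk k = fun p : ℝ × ℝ =>
      ((3/2 - p.1 * (1/2)) - p.1 * (p.2 * (p.2 * p.2)),
       ((1/2 - k) - (3/2 - k) * p.2) + p.1 * (p.2 * (p.2 * p.2))) := by
    funext p; simp only [Fk]; congr 1 <;> ring
  have hcube : HasFDerivAt (fun p : ℝ × ℝ => p.2 * (p.2 * p.2)) _ ((1:ℝ), (1:ℝ)) :=
    (hasFDerivAt_snd (𝕜 := ℝ)).mul ((hasFDerivAt_snd (𝕜 := ℝ)).mul (hasFDerivAt_snd (𝕜 := ℝ)))
  have h1 : HasFDerivAt (fun p : ℝ × ℝ =>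
      (3/2 - p.1 * (1/2)) - p.1 * (p.2 * (p.2 * p.2))) _ ((1:ℝ), (1:ℝ)) :=
    ((hasFDerivAt_const (3/2 : ℝ) _).sub (hasFDerivAt_fst.mul_const (1/2))).sub
      (hasFDerivAt_fst.mul hcube)
  have h2 : HasFDerivAt (fun p : ℝ × ℝ =>
      ((1/2 - k) - (3/2 - k) * p.2) + p.1 * (p.2 * (p.2 * p.2))) _ ((1:ℝ), (1:ℝ)) :=
    ((hasFDerivAt_const (1/2 - k : ℝ) _).sub (hasFDerivAt_snd.const_mul (3/2 - k))).add
      (hasFDerivAt_fst.mul hcube)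
  have h : HasFDerivAt (Fk k) _ ((1:ℝ), (1:ℝ)) := hg ▸ HasFDerivAt.prodMk h1 h2
  refine ⟨h.differentiableAt, ?_, ?_⟩ <;> rw [h.fderiv] <;>
    simp [ContinuousLinearMap.prod_apply, Prod.ext_iff] <;> norm_num <;>
      first | (constructor <;> ring) | ring

lemma mem_spec_iff (M : Matrix (Fin 2) (Fin 2) ℂ) (μ : ℂ) :
    μ ∈ spectrum ℂ M ↔ (algebraMap ℂ (Matrix (Fin 2) (Fin 2) ℂ) μ - M).det = 0 := by
  rw [spectrum.mem_iff, Matrix.isUnit_iff_isUnit_det, not_iff_comm, isUnit_iff_ne_zero]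

lemma spec_Ak (k : ℝ) (μ : ℂ) :
    μ ∈ spectrum ℂ ((Ak k).map Complex.ofReal) ↔
      μ ^ 2 - k * μ + (3/4 - 3 * k / 2) = 0 := by
  rw [mem_spec_iff]
  have h : (algebraMap ℂ (Matrix (Fin 2) (Fin 2) ℂ)) μ - (Ak k).map Complex.ofReal =
      !![μ + 3/2, 3; -1, μ - (3/2 + k)] := by
    ext i j
    fin_cases i <;> fin_cases j <;>
      simp [Ak, Matrix.algebraMap_eq_diagonal, Matrix.diagonal] <;> ring
  rw [h, Matrix.det_fin_two_of]
  constructor <;> intro h' <;> linear_combination h'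

lemma spec_Ak_eq (k : ℝ) (hk : k ^ 2 + 6 * k - 3 < 0) :
    spectrum ℂ ((Ak k).map Complex.ofReal) =
      {((k : ℂ) + Complex.I * (Real.sqrt (3 - 6 * k - k ^ 2) : ℝ)) / 2,
       ((k : ℂ) - Complex.I * (Real.sqrt (3 - 6 * k - k ^ 2) : ℝ)) / 2} := by
  have hnn : (0:ℝ) ≤ 3 - 6 * k - k ^ 2 := by linarith
  have hs : ((Real.sqrt (3 - 6 * k - k ^ 2) : ℝ) : ℂ) ^ 2 = (3:ℂ) - 6 * k - (k:ℂ) ^ 2 := by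
    rw [← Complex.ofReal_pow, Real.sq_sqrt hnn]; push_cast; ring
  ext μ
  rw [spec_Ak]
  have key : μ ^ 2 - (k:ℂ) * μ + (3/4 - 3 * k / 2) =
      (μ - ((k : ℂ) + Complex.I * (Real.sqrt (3 - 6 * k - k ^ 2) : ℝ)) / 2) *
      (μ - ((k : ℂ) - Complex.I * (Real.sqrt (3 - 6 * k - k ^ 2) : ℝ)) / 2) := by
    linear_combination (((Real.sqrt (3 - 6 * k - k ^ 2) : ℝ) : ℂ) ^ 2 / 4) * Complex.I_sq
      - (1/4 : ℂ) * hs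
  rw [key, mul_eq_zero, sub_eq_zero, sub_eq_zero]
  simp [Set.mem_insert_iff]

theorem stmt_10 :
    (∀ k : ℝ, Fk k (1, 1) = (0, 0)) ∧
    (∀ k : ℝ, DifferentiableAt ℝ (Fk k) (1, 1) ∧
      fderiv ℝ (Fk k) (1, 1) (1, 0) = (-3/2, 1) ∧
      fderiv ℝ (Fk k) (1, 1) (0, 1) = (-3, 3/2 + k)) ∧
    (∀ k : ℝ, (Ak k).charpoly = X ^ 2 - C k * X + C (3/4 - 3 * k / 2)) ∧
    (∀ k : ℝ, k ^ 2 + 6 * k - 3 < 0 →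
      spectrum ℂ ((Ak k).map Complex.ofReal) =
        {((k : ℂ) + Complex.I * (Real.sqrt (3 - 6 * k - k ^ 2) : ℝ)) / 2,
         ((k : ℂ) - Complex.I * (Real.sqrt (3 - 6 * k - k ^ 2) : ℝ)) / 2}) ∧
    spectrum ℂ ((Ak 0).map Complex.ofReal) =
      {Complex.I * ((Real.sqrt 3 / 2 : ℝ) : ℂ),
       -(Complex.I * ((Real.sqrt 3 / 2 : ℝ) : ℂ))} := by
  refine ⟨fun k => ?_, hFk, fun k => ?_, spec_Ak_eq, ?_⟩
  · simp [Fk]; norm_num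
  · apply Polynomial.funext
    intro x
    rw [Matrix.charpoly, Matrix.det_fin_two]
    simp [Matrix.charmatrix_apply, Ak, Matrix.one_apply]
    ring
  · rw [spec_Ak_eq 0 (by norm_num)]
    congr 1 <;> norm_num <;> push_cast <;> ring
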